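/- Let I be w-sparse (any two 1-bits at least w positions apart, w ≥ 2) with 1-bits at positions ind_1 < ind_2 < ... < ind_h, and let elements k_i, k'_i < 2^{w-1} for each i. Let V = Σ_i k_i <<< ind_i and U = Σ_i k'_i <<< ind_i. Then the element-wise sum (V + U) restricted by AND with MASK(I,w) = (I <<< w) - I decodes at index ind_i to (k_i + k'_i) mod 2^w; in particular if k_i + k'_i < 2^w for all i, then V + U = Σ_i (k_i + k'_i) <<< ind_i and the additions do not interfere across elements. -/

import Mathlib

lemma mapAux_sum_lt (w : ℕ) (ind v : ℕ → ℕ) (hv : ∀ j, v j < 2 ^ w)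
    (hgap : ∀ j, ind j + w ≤ ind (j + 1)) :
    ∀ n, (∑ j ∈ Finset.range n, v j * 2 ^ ind j) < 2 ^ ind n := by
  intro n
  induction n with
  | zero => simpa using Nat.pos_pow_of_pos _ (by norm_num)
  | succ n ih =>
    rw [Finset.sum_range_succ]
    calc (∑ j ∈ Finset.range n, v j * 2 ^ ind j) + v n * 2 ^ ind n
        < 2 ^ ind n + v n * 2 ^ ind n := by omega
      _ = (1 + v n) * 2 ^ ind n := by ring
      _ ≤ 2 ^ w * 2 ^ ind n := Nat.mul_le_mul_right _ (by have := hv n; omega)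
      _ = 2 ^ (ind n + w) := by rw [pow_add]; ring
      _ ≤ 2 ^ ind (n + 1) := Nat.pow_le_pow_right (by norm_num) (hgap n)

/-- Element-wise addition of maps with flag bits clear does not interfere
across elements: the sum decodes at each index to `(k i + k' i) % 2^w`
(which, as `k i, k' i < 2^(w-1)`, is just `k i + k' i`), and the encoded
sum is the encoding of the element-wise sums. -/
theorem mapElementwiseAdd (w h : ℕ) (hw : 2 ≤ w) (ind : Fin h → ℕ)
    (hgap : ∀ i j : Fin h, i < j → ind i + w ≤ ind j)
    (k k' : Fin h → ℕ) (hk : ∀ i, k i < 2 ^ (w - 1)) (hk' : ∀ i, k' i < 2 ^ (w - 1)) :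
    (∀ i : Fin h,
      (((∑ j : Fin h, k j <<< ind j) + (∑ j : Fin h, k' j <<< ind j)) >>> ind i)
        &&& (2 ^ w - 1) = (k i + k' i) % 2 ^ w) ∧
    (∑ j : Fin h, k j <<< ind j) + (∑ j : Fin h, k' j <<< ind j)
      = ∑ j : Fin h, (k j + k' j) <<< ind j := by
  have hsum : ∀ i : Fin h, k i + k' i < 2 ^ w := by
    intro i
    have h2 : 2 ^ (w - 1) + 2 ^ (w - 1) = 2 ^ w := by
      have hww : 2 ^ w = 2 ^ (w - 1) * 2 := by
        rw [← pow_succ]; congr 1; omega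
      omega
    have := hk i; have := hk' i; omega
  have key2 : (∑ j : Fin h, k j <<< ind j) + (∑ j : Fin h, k' j <<< ind j)
      = ∑ j : Fin h, (k j + k' j) <<< ind j := by
    simp only [Nat.shiftLeft_eq, add_mul, Finset.sum_add_distrib]
  refine ⟨?_, key2⟩
  intro i
  rw [key2]
  have hh : 0 < h := i.pos
  -- extend ind and values to ℕ
  set M : ℕ := ind ⟨h - 1, by omega⟩ with hM
  set indN : ℕ → ℕ := fun n => if hn : n < h then ind ⟨n, hn⟩ else M + w * (n - h + 1) with hindN
  set vN : ℕ → ℕ := fun n => if hn : n < h then k ⟨n, hn⟩ + k' ⟨n, hn⟩ else 0 with hvN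
  have hvlt : ∀ j, vN j < 2 ^ w := by
    intro j
    simp only [hvN]
    split
    · exact hsum _
    · exact Nat.pow_pos (by norm_num)
  have hgapN : ∀ j, indN j + w ≤ indN (j + 1) := by
    intro j
    simp only [hindN]
    split <;> split
    · exact hgap _ _ (by simp [Fin.lt_def])
    · rename_i hj hj1
      have hjeq : j = h - 1 := by omega
      subst hjeq
      have e1 : h - 1 + 1 - h + 1 = 1 := by omega
      rw [e1, mul_one]
    · omega
    · rename_i hj hj1
      have e : w * (j + 1 - h + 1) = w * (j - h + 1) + w := by
        have e2 : j + 1 - h + 1 = (j - h + 1) + 1 := by omega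
        rw [e2, Nat.mul_succ]
      rw [e]
      exact Nat.le_of_eq (Nat.add_assoc _ _ _)
  have hS : (∑ j : Fin h, (k j + k' j) <<< ind j)
      = ∑ j ∈ Finset.range h, vN j * 2 ^ indN j := by
    rw [← Fin.sum_univ_eq_sum_range (fun j => vN j * 2 ^ indN j) h]
    refine Finset.sum_congr rfl fun j _ => ?_
    simp only [hvN, hindN, Nat.shiftLeft_eq, dif_pos j.isLt, Fin.eta]
  rw [hS]
  -- split the sum at i
  have hsplit : (∑ j ∈ Finset.range h, vN j * 2 ^ indN j)
      = (∑ j ∈ Finset.range i.val, vN j * 2 ^ indN j) + vN i.val * 2 ^ indN i.val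
        + ∑ j ∈ Finset.Ico (i.val + 1) h, vN j * 2 ^ indN j := by
    rw [← Finset.sum_range_succ, Finset.range_eq_Ico, Finset.range_eq_Ico]
    exact (Finset.sum_Ico_consecutive _ (Nat.zero_le _) i.isLt).symm
  rw [hsplit]
  have hind_i : indN i.val = ind i := by simp [hindN, i.isLt]
  have hA : (∑ j ∈ Finset.range i.val, vN j * 2 ^ indN j) < 2 ^ ind i := by
    rw [← hind_i]; exact mapAux_sum_lt w indN vN hvlt hgapN i.val
  have hB : (2 ^ (ind i + w)) ∣ ∑ j ∈ Finset.Ico (i.val + 1) h, vN j * 2 ^ indN j := by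
    refine Finset.dvd_sum fun j hj => ?_
    rw [Finset.mem_Ico] at hj
    have hjh : j < h := hj.2
    have hle : ind i + w ≤ indN j := by
      simp only [hindN, dif_pos hjh]
      exact hgap i ⟨j, hjh⟩ (by simp [Fin.lt_def]; omega)
    exact Dvd.dvd.mul_left (pow_dvd_pow 2 hle) _
  obtain ⟨c, hc⟩ := hB
  rw [hc, hind_i]
  have hvi : vN i.val = k i + k' i := by simp [hvN, i.isLt]
  rw [hvi]
  set A := ∑ j ∈ Finset.range i.val, vN j * 2 ^ indN j with hAdef
  have hexpr : A + (k i + k' i) * 2 ^ ind i + 2 ^ (ind i + w) * c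
      = A + (k i + k' i + 2 ^ w * c) * 2 ^ ind i := by
    rw [pow_add]; ring
  rw [hexpr, Nat.shiftRight_eq_div_pow, Nat.and_two_pow_sub_one_eq_mod,
    Nat.add_mul_div_right _ _ (Nat.pow_pos (by norm_num)),
    Nat.div_eq_of_lt hA, Nat.zero_add, Nat.add_mul_mod_self_left]
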